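/- Let X = x ∂/∂u + y ∂/∂v and P = p ∂/∂u + q ∂/∂v be continuously differentiable vector fields on ℝ² and let λ : ℝ² → ℝ be a function such that the Lie bracket satisfies [P,X] = λ·X, i.e. P(x) − X(p) = λ·x and P(y) − X(q) = λ·y everywhere. Then the function W := x·q − y·p satisfies X(W) = (div X)·W everywhere, where X(h) = x·∂_u h + y·∂_v h and div X = ∂_u x + ∂_v y. -/

import Mathlib

/-- If `P = (a, b)` is an infinitesimal symmetry of `X = (x, y)`, i.e.
`[P, X] = l • X` componentwise, then `W = x·b − y·a` satisfies
`X(W) = (div X) · W`. -/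
theorem stmt_4 (x y a b l : ℝ × ℝ → ℝ)
    (hx : ContDiff ℝ 1 x) (hy : ContDiff ℝ 1 y)
    (ha : ContDiff ℝ 1 a) (hb : ContDiff ℝ 1 b)
    -- P(x) − X(a) = l·x
    (h1 : ∀ p : ℝ × ℝ,
      (a p * fderiv ℝ x p (1, 0) + b p * fderiv ℝ x p (0, 1)) -
        (x p * fderiv ℝ a p (1, 0) + y p * fderiv ℝ a p (0, 1)) = l p * x p)
    -- P(y) − X(b) = l·y
    (h2 : ∀ p : ℝ × ℝ,
      (a p * fderiv ℝ y p (1, 0) + b p * fderiv ℝ y p (0, 1)) -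
        (x p * fderiv ℝ b p (1, 0) + y p * fderiv ℝ b p (0, 1)) = l p * y p) :
    ∀ p : ℝ × ℝ,
      x p * fderiv ℝ (fun q => x q * b q - y q * a q) p (1, 0) +
        y p * fderiv ℝ (fun q => x q * b q - y q * a q) p (0, 1) =
      (fderiv ℝ x p (1, 0) + fderiv ℝ y p (0, 1)) *
        (x p * b p - y p * a p) := by
  intro p
  have Dx := (hx.differentiable one_ne_zero).differentiableAt (x := p)
  have Dy := (hy.differentiable one_ne_zero).differentiableAt (x := p)
  have Da := (ha.differentiable one_ne_zero).differentiableAt (x := p)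
  have Db := (hb.differentiable one_ne_zero).differentiableAt (x := p)
  have key : fderiv ℝ (fun q => x q * b q - y q * a q) p =
      (x p • fderiv ℝ b p + b p • fderiv ℝ x p) -
        (y p • fderiv ℝ a p + a p • fderiv ℝ y p) := by
    rw [fderiv_fun_sub (f := fun q => x q * b q) (g := fun q => y q * a q) (Dx.mul Db) (Dy.mul Da), fderiv_fun_mul Dx Db, fderiv_fun_mul Dy Da]
  rw [key]
  simp only [ContinuousLinearMap.sub_apply, ContinuousLinearMap.add_apply,
    ContinuousLinearMap.smul_apply, smul_eq_mul]
  linear_combination y p * h1 p - x p * h2 p
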